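/- arXiv:2006.10590 — 3 statements merged into one kernel-verified Lean document; each statement's English description precedes it below -/
import Mathlib

section
/- Let K be a number field of odd degree over ℚ, let ι : K → ℂ be a complex embedding, and let r > 0 be a positive real number. Then there are at most 2 elements x ∈ K with |ι(x)| = r. -/
open IntermediateField in
set_option synthInstance.maxHeartbeats 400000 in
set_option maxHeartbeats 1000000 in

lemma key (K : Type*) [Field K] [NumberField K]
    (hodd : Odd (Module.finrank ℚ K)) (ι : K →+* ℂ) (z : K)
    (hz : ‖ι z‖ = 1) : z = 1 ∨ z = -1 := by
  have hz0 : z ≠ 0 := by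
    intro h; rw [h] at hz; simp at hz
  by_cases him : (ι z).im = 0
  · -- ι z is real, |ι z| = 1 so ι z = ±1
    have : ι z = 1 ∨ ι z = -1 := by
      have hre : (ι z) = ((ι z).re : ℂ) := by
        exact Complex.ext (by simp) (by simp [him])
      rw [hre] at hz ⊢
      rw [Complex.norm_real, Real.norm_eq_abs] at hz
      rcases abs_eq (by norm_num : (0:ℝ) ≤ 1) |>.1 hz with h | h <;> [left; right] <;>
        rw [h] <;> norm_num
    rcases this with h | h
    · left; exact ι.injective (by rw [h]; simp)
    · right; exact ι.injective (by rw [h]; simp)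
  · exfalso
    set w : K := z + z⁻¹ with hw
    have hconj : (ι z)⁻¹ = starRingEnd ℂ (ι z) := by
      rw [Complex.inv_def, Complex.normSq_eq_norm_sq, hz]; simp
    have hιw : (ι w).im = 0 := by
      rw [hw, map_add, map_inv₀, hconj]
      simp
    -- the subfield of K mapping into ℝ
    set S : Subfield K := (Complex.ofRealHom.fieldRange).comap ι with hS
    have hmemS : ∀ y : K, y ∈ S ↔ (ι y).im = 0 := by
      intro y
      constructor
      · rintro ⟨a, ha⟩
        rw [← ha]; simp
      · intro h
        exact ⟨(ι y).re, Complex.ext (by simp) (by simp [h])⟩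
    have hQ : ∀ q : ℚ, algebraMap ℚ K q ∈ S := by
      intro q
      rw [hmemS]
      have : ι (algebraMap ℚ K q) = (q : ℂ) := by
        rw [← Complex.ofReal_ratCast]
        simp [map_ratCast]
      rw [this]; simp
    set F : IntermediateField ℚ K := ℚ⟮w⟯ with hF
    have hFle : F ≤ Subfield.toIntermediateField S hQ := by
      rw [hF]
      apply IntermediateField.adjoin_le_iff.2
      intro y hy
      rcases hy with rfl
      exact (hmemS w).2 hιw
    have hzF : z ∉ F := by
      intro h
      exact him ((hmemS z).1 (hFle h))
    have hint : IsIntegral F z := IsIntegral.of_finite F z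
    -- minpoly divides X^2 - C w X + 1
    set w' : F := ⟨w, IntermediateField.mem_adjoin_simple_self ℚ w⟩ with hw'
    set p : Polynomial F := Polynomial.X ^ 2 - Polynomial.C w' * Polynomial.X + 1 with hp
    have haeval : Polynomial.aeval z p = 0 := by
      rw [hp]
      simp only [map_add, map_sub, map_mul, map_pow, Polynomial.aeval_X, Polynomial.aeval_C, map_one]
      have : (algebraMap F K) w' = w := rfl
      rw [this, hw]
      field_simp
      ring
    have hpdeg : p.natDegree = 2 := by
      rw [hp]
      compute_degree!
    have hpne : p ≠ 0 := by
      intro h; rw [h] at hpdeg; simp at hpdeg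
    have hdvd : minpoly F z ∣ p := minpoly.dvd F z haeval
    have hdle : (minpoly F z).natDegree ≤ 2 := by
      rw [← hpdeg]
      exact Polynomial.natDegree_le_of_dvd hdvd hpne
    have hdne1 : (minpoly F z).natDegree ≠ 1 := by
      intro h
      rcases minpoly.natDegree_eq_one_iff.1 h with ⟨a, ha⟩
      apply hzF
      rw [← ha]
      exact a.2
    have hdpos : 0 < (minpoly F z).natDegree := minpoly.natDegree_pos hint
    have hd2 : (minpoly F z).natDegree = 2 := by omega
    have hfr : Module.finrank F F⟮z⟯ = 2 := by
      rw [IntermediateField.adjoin.finrank hint, hd2]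
    have h2dvd : 2 ∣ Module.finrank ℚ K := by
      have t1 : Module.finrank ℚ F * Module.finrank F K = Module.finrank ℚ K :=
        Module.finrank_mul_finrank ℚ F K
      have t2 : Module.finrank F F⟮z⟯ * Module.finrank F⟮z⟯ K = Module.finrank F K :=
        Module.finrank_mul_finrank F F⟮z⟯ K
      rw [← t1, ← t2, hfr]
      exact ⟨Module.finrank ℚ F * Module.finrank ↥F⟮z⟯ K, by ring⟩
    rw [Nat.odd_iff] at hodd
    omega

/-- Let `K` be a number field of odd degree over `ℚ`, let `ι : K → ℂ` be a complex
embedding, and let `r > 0`. Then there are at most 2 elements `x ∈ K` with `|ι x| = r`. -/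
theorem stmt_0 (K : Type*) [Field K] [NumberField K]
    (hodd : Odd (Module.finrank ℚ K)) (ι : K →+* ℂ) (r : ℝ) (hr : 0 < r) :
    {x : K | ‖ι x‖ = r}.Finite ∧
      {x : K | ‖ι x‖ = r}.ncard ≤ 2 := by
  set A := {x : K | ‖ι x‖ = r} with hA
  rcases Set.eq_empty_or_nonempty A with h | ⟨x₀, hx₀⟩
  · rw [h]; simp
  · have hx₀r : ‖ι x₀‖ = r := hx₀
    have hx₀0 : x₀ ≠ 0 := by
      intro h0
      rw [h0, map_zero, norm_zero] at hx₀r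
      exact absurd hx₀r.symm (ne_of_gt hr)
    have hsub : A ⊆ {x₀, -x₀} := by
      intro x hx
      have hxr : ‖ι x‖ = r := hx
      have h1 : ‖ι (x / x₀)‖ = 1 := by
        rw [map_div₀, norm_div, hxr, hx₀r, div_self (ne_of_gt hr)]
      rcases key K hodd ι (x / x₀) h1 with h | h
      · left
        field_simp at h
        exact h
      · right
        rw [div_eq_iff hx₀0] at h
        rw [h]; ring_nf; rfl
    have hfin : A.Finite := Set.Finite.subset ((Set.finite_singleton (-x₀)).insert x₀) hsub
    refine ⟨hfin, ?_⟩
    calc A.ncard ≤ ({x₀, -x₀} : Set K).ncard :=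
          Set.ncard_le_ncard hsub ((Set.finite_singleton (-x₀)).insert x₀)
      _ ≤ 2 := by
          apply le_trans (Set.ncard_insert_le _ _)
          simp
end

section
/- Let K be a number field, α ∈ K nonzero, and suppose the set C_α = {x ∈ K : |ι(x)| = |ι(α)| for all embeddings ι : K → ℂ} contains at least 3 elements. Then K contains a CM subfield. -/
/-- A field `L` is a CM field if it is totally imaginary (no real embeddings)
and a quadratic extension of a totally real subfield. -/
def IsCMField (L : Type*) [Field L] : Prop :=
  (∀ φ : L →+* ℂ, ¬ NumberField.ComplexEmbedding.IsReal φ) ∧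
    ∃ F : Subfield L, (∀ ψ : F →+* ℂ, NumberField.ComplexEmbedding.IsReal ψ) ∧
      Module.finrank F L = 2

set_option synthInstance.maxHeartbeats 1000000
set_option maxHeartbeats 1000000

section

open NumberField IntermediateField Polynomial

lemma ext_embedding {F K : Type*} [Field F] [Field K] [Algebra F K]
    [Algebra.IsAlgebraic F K] (ψ : F →+* ℂ) :
    ∃ φ : K →+* ℂ, ∀ t : F, φ (algebraMap F K t) = ψ t := by
  letI : Algebra F ℂ := ψ.toAlgebra
  let Φ : K →ₐ[F] ℂ := IsAlgClosed.lift
  exact ⟨Φ.toRingHom, fun t => Φ.commutes t⟩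

lemma unit_real {w : ℂ} (h1 : ‖w‖ = 1) (hr : starRingEnd ℂ w = w) :
    w = 1 ∨ w = -1 := by
  have : w = (w.re : ℂ) := (Complex.conj_eq_iff_re.mp hr).symm
  rw [this] at h1 ⊢
  rw [Complex.norm_real, Real.norm_eq_abs] at h1
  rcases abs_eq (by norm_num : (0:ℝ) ≤ 1) |>.mp h1 with h | h <;> simp [h]

lemma key_s2 (K : Type*) [Field K] [NumberField K] (β : K)
    (h1 : β ≠ 1) (hm1 : β ≠ -1)
    (habs : ∀ ι : K →+* ℂ, ‖ι β‖ = 1) :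
    ∃ L : Subfield K, _root_.IsCMField L := by
  classical
  have hβint : IsIntegral ℚ β := Algebra.IsIntegral.isIntegral β
  haveI : FiniteDimensional ℚ (ℚ⟮β⟯ : IntermediateField ℚ K) :=
    adjoin.finiteDimensional hβint
  set M : IntermediateField ℚ K := ℚ⟮β⟯ with hM
  haveI : FiniteDimensional ℚ M := by rw [hM]; infer_instance
  haveI : FiniteDimensional M K := FiniteDimensional.right ℚ M K
  set b : M := AdjoinSimple.gen ℚ β with hb
  have hbcoe : algebraMap M K b = β := AdjoinSimple.algebraMap_gen ℚ β
  -- every embedding of M sends b to the unit circle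
  have habM : ∀ φ : ↥M →+* ℂ, ‖φ b‖ = 1 := by
    intro φ
    obtain ⟨Φ, hΦ⟩ := ext_embedding (K := K) φ
    rw [← hΦ b, hbcoe]
    exact habs Φ
  -- b ≠ ±1
  have hb1 : b ≠ 1 := fun h => h1 (by rw [← hbcoe, h, map_one])
  have hbm1 : b ≠ -1 := fun h => hm1 (by rw [← hbcoe, h, map_neg, map_one])
  have hb0 : b ≠ 0 := by
    intro h
    obtain ⟨φ, -⟩ := ext_embedding (F := ℚ) (K := M) (algebraMap ℚ ℂ)
    have := habM φ
    rw [h, map_zero] at this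
    simp at this
  -- M is totally imaginary
  have himag : ∀ φ : ↥M →+* ℂ, ¬ ComplexEmbedding.IsReal φ := by
    intro φ hreal
    have hconj : starRingEnd ℂ (φ b) = φ b := by
      have := ComplexEmbedding.isReal_iff.mp hreal
      exact RingHom.congr_fun this b
    rcases unit_real (habM φ) hconj with h | h
    · exact hb1 (φ.injective (by rw [h, map_one]))
    · exact hbm1 (φ.injective (by rw [h, map_neg, map_one]))
  -- the totally real subfield
  set γ : ↥M := b + b⁻¹ with hγ
  set F : IntermediateField ℚ ↥M := ℚ⟮γ⟯ with hF
  haveI : FiniteDimensional ↥F ↥M := FiniteDimensional.right ℚ ↥F ↥M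
  have hγF : γ ∈ F := mem_adjoin_simple_self ℚ γ
  have htr : ∀ ψ : ↥F →+* ℂ, ComplexEmbedding.IsReal ψ := by
    intro ψ
    obtain ⟨φ, hφ⟩ := ext_embedding (K := ↥M) ψ
    have hreal : starRingEnd ℂ (φ γ) = φ γ := by
      have h' : φ γ = φ b + (starRingEnd ℂ) (φ b) := by
        rw [hγ, map_add, map_inv₀, Complex.inv_eq_conj (habM φ)]
      rw [h', map_add, Complex.conj_conj, add_comm]
    suffices h : ComplexEmbedding.conjugate ψ = ψ from
      ComplexEmbedding.isReal_iff.mpr h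
    have hext : (ComplexEmbedding.conjugate ψ).toRatAlgHom = ψ.toRatAlgHom := by
      apply adjoin_algHom_ext
      rintro x (rfl : x = γ)
      have hψγ : ψ ⟨γ, hγF⟩ = φ γ := by
        rw [← hφ ⟨γ, hγF⟩]; rfl
      show starRingEnd ℂ (ψ ⟨γ, hγF⟩) = ψ ⟨γ, hγF⟩
      rw [hψγ]; exact hreal
    exact congr_arg AlgHom.toRingHom hext
  -- b generates M over F
  have hbtop : (ℚ⟮b⟯ : IntermediateField ℚ ↥M) = ⊤ := by
    apply lift_injective M
    erw [lift_adjoin_simple, lift_top]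
    rw [AdjoinSimple.coe_gen]
  have hFb : (↥F)⟮b⟯ = (⊤ : IntermediateField ↥F ↥M) := by
    apply restrictScalars_injective ℚ
    rw [restrictScalars_top]
    rw [eq_top_iff, ← hbtop]
    exact adjoin_simple_le_iff.mpr (mem_adjoin_simple_self ↥F b)
  have hbint : IsIntegral ↥F b := IsIntegral.of_finite ↥F b
  have hfr : Module.finrank ↥F ↥M = (minpoly ↥F b).natDegree := by
    have h2 := adjoin.finrank hbint
    rw [hFb, finrank_top'] at h2
    exact h2
  set g : ↥F := ⟨γ, hγF⟩ with hg
  set p : Polynomial ↥F := X ^ 2 - C g * X + 1 with hp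
  have hpmonic : p.Monic := by
    have : p.natDegree = 2 := by rw [hp]; compute_degree!
    apply Polynomial.monic_of_natDegree_le_of_coeff_eq_one 2
    · rw [this]
    · simp [hp, coeff_one]
  have hpdeg : p.natDegree = 2 := by rw [hp]; compute_degree!
  have haev : Polynomial.aeval b p = 0 := by
    have hgmap : (algebraMap ↥F ↥M) g = γ := rfl
    rw [hp]
    simp only [map_add, map_sub, map_mul, map_pow, map_one, aeval_X, aeval_C, hgmap, hγ]
    field_simp
    ring
  have hdvd := minpoly.dvd ↥F b haev
  have hle : (minpoly ↥F b).natDegree ≤ 2 :=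
    hpdeg ▸ Polynomial.natDegree_le_of_dvd hdvd hpmonic.ne_zero
  have hne1 : (minpoly ↥F b).natDegree ≠ 1 := by
    intro h
    obtain ⟨c, hc⟩ := (minpoly.natDegree_eq_one_iff).mp h
    obtain ⟨φ0, -⟩ := ext_embedding (F := ℚ) (K := ↥M) (algebraMap ℚ ℂ)
    have hψ := htr (φ0.comp (algebraMap ↥F ↥M))
    have hconj : starRingEnd ℂ (φ0 b) = φ0 b := by
      have h3 := RingHom.congr_fun (ComplexEmbedding.isReal_iff.mp hψ) c
      rw [ComplexEmbedding.conjugate_coe_eq] at h3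
      simpa [hc] using h3
    rcases unit_real (habM φ0) hconj with h' | h'
    · exact hb1 (φ0.injective (by rw [h', map_one]))
    · exact hbm1 (φ0.injective (by rw [h', map_neg, map_one]))
  have hpos : 0 < (minpoly ↥F b).natDegree := minpoly.natDegree_pos hbint
  have hfin : Module.finrank ↥F ↥M = 2 := by omega
  exact ⟨M.toSubfield, himag, F.toSubfield, htr, hfin⟩

end

/-- If `K` is a number field, `α ∈ K` is nonzero, and the set
`C_α = {x ∈ K : |ι x| = |ι α| for all embeddings ι : K → ℂ}` contains at least 3
elements, then `K` contains a CM subfield. -/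
theorem stmt_2 (K : Type*) [Field K] [NumberField K] (α : K) (hα : α ≠ 0)
    (x y z : K) (hxy : x ≠ y) (hxz : x ≠ z) (hyz : y ≠ z)
    (hx : ∀ ι : K →+* ℂ, ‖ι x‖ = ‖ι α‖)
    (hy : ∀ ι : K →+* ℂ, ‖ι y‖ = ‖ι α‖)
    (hz : ∀ ι : K →+* ℂ, ‖ι z‖ = ‖ι α‖) :
    ∃ L : Subfield K, IsCMField L := by
  obtain ⟨ι₀, -⟩ := ext_embedding (F := ℚ) (K := K) (algebraMap ℚ ℂ)
  have hι₀α : ‖ι₀ α‖ ≠ 0 := by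
    intro h
    exact hα (ι₀.injective (by rw [norm_eq_zero.mp h, map_zero]))
  have hy0 : y ≠ 0 := by
    intro h
    apply hι₀α
    rw [← hy ι₀, h, map_zero, norm_zero]
  have hz0 : z ≠ 0 := by
    intro h
    apply hι₀α
    rw [← hz ι₀, h, map_zero, norm_zero]
  have habs : ∀ (u v : K), v ≠ 0 →
      (∀ ι : K →+* ℂ, ‖ι u‖ = ‖ι α‖) →
      (∀ ι : K →+* ℂ, ‖ι v‖ = ‖ι α‖) →
      ∀ ι : K →+* ℂ, ‖ι (u / v)‖ = 1 := by
    intro u v hv hu hvα ι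
    have hvne : ‖ι v‖ ≠ 0 := fun h =>
      hv (ι.injective (by rw [norm_eq_zero.mp h, map_zero]))
    rw [map_div₀, norm_div, hu ι, ← hvα ι, div_self hvne]
  by_cases hcase : x / y = -1
  · have hxy' : x = -y := by
      have h' := (div_eq_iff hy0).mp hcase; rw [neg_one_mul] at h'; exact h'
    apply key_s2 K (x / z)
    · intro h
      exact hxz ((div_eq_one_iff_eq hz0).mp h)
    · intro h
      have hxz' : x = -z := by
        have h' := (div_eq_iff hz0).mp h; rw [neg_one_mul] at h'; exact h'
      exact hyz (by rw [← neg_neg y, ← hxy', hxz', neg_neg])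
    · exact habs x z hz0 hx hz
  · apply key_s2 K (x / y)
    · intro h
      exact hxy ((div_eq_one_iff_eq hy0).mp h)
    · exact hcase
    · exact habs x y hy0 hx hy
end

section
/- Let K ⊆ L be number fields with L/K of degree q (q an odd prime) of the form L = K(α^{1/q}) where α ∈ K is not a qth power in K. Let p be a finite prime of K not dividing q, unramified in L, with residue field κ of size N. Then the number of primes of L above p is 1 if the reduction of α is not a qth power in κ×, and is 1 + (q−1)/a otherwise, where a is the multiplicative order of N modulo q. -/
open Polynomial UniqueFactorizationMonoid

lemma aux_card_ne (κ : Type*) [Field κ] [Fintype κ] {q : ℕ} (hq : q.Prime)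
    (hq0 : (q : κ) ≠ 0) : ((Fintype.card κ : ZMod q)) ≠ 0 := by
  have hP := ringChar.charP κ
  have hPp : (ringChar κ).Prime := CharP.char_is_prime κ (ringChar κ)
  obtain ⟨s, -, hcard⟩ := FiniteField.card κ (ringChar κ)
  haveI : NeZero q := ⟨hq.ne_zero⟩
  rw [Ne, ZMod.natCast_eq_zero_iff]
  intro hdvd
  rw [hcard] at hdvd
  have : q ∣ ringChar κ := hq.dvd_of_dvd_pow hdvd
  have : q = ringChar κ := (Nat.prime_dvd_prime_iff_eq hq hPp).mp this
  apply hq0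
  rw [this]
  exact CharP.cast_eq_zero κ _

lemma aux_orderOf_pos {q : ℕ} (hq : q.Prime) {x : ZMod q} (hx : x ≠ 0) :
    0 < orderOf x := by
  haveI : Fact q.Prime := ⟨hq⟩
  have h1 : x ^ (q - 1) = 1 := ZMod.pow_card_sub_one_eq_one hx
  have : IsOfFinOrder x := isOfFinOrder_iff_pow_eq_one.mpr
    ⟨q - 1, Nat.sub_pos_of_lt hq.one_lt, h1⟩
  exact this.orderOf_pos

lemma aux_deg_factor {κ : Type*} [Field κ] [Fintype κ] {q : ℕ} (hq : q.Prime)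
    {c y : κ} (hc : c ≠ 0) (hq0 : (q : κ) ≠ 0) (hy : y ^ q = c)
    {d : κ[X]} (hmon : d.Monic) (hirr : Irreducible d) (hdvd : d ∣ X ^ q - C c)
    (hne : d ≠ X - C y) :
    d.natDegree = orderOf ((Fintype.card κ : ZMod q)) := by
  classical
  haveI : Fact q.Prime := ⟨hq⟩
  set N := Fintype.card κ with hN
  set a := orderOf ((N : ZMod q)) with ha
  have hN1 : 1 < N := Fintype.one_lt_card
  have hNq : ((N : ZMod q)) ≠ 0 := aux_card_ne κ hq hq0
  have hapos : 0 < a := aux_orderOf_pos hq hNq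
  -- q ∣ N ^ a - 1
  have hNa1 : 1 ≤ N ^ a := Nat.one_le_pow _ _ (by omega)
  have hqa : q ∣ N ^ a - 1 := by
    have h1 : ((N : ZMod q)) ^ a = 1 := pow_orderOf_eq_one _
    have : ((N ^ a - 1 : ℕ) : ZMod q) = 0 := by
      push_cast [Nat.cast_sub hNa1]
      rw [h1]; ring
    exact (ZMod.natCast_eq_zero_iff _ _).mp this
  haveI : Fact (Irreducible d) := ⟨hirr⟩
  set F := AdjoinRoot d with hF
  let pb : PowerBasis κ F := AdjoinRoot.powerBasis hmon.ne_zero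
  haveI : FiniteDimensional κ F := pb.finite
  haveI : Finite F := Module.finite_of_finite κ
  haveI : Fintype F := Fintype.ofFinite F
  have hrank : Module.finrank κ F = d.natDegree := by
    rw [pb.finrank]; rfl
  set m := d.natDegree with hm
  have hmpos : 0 < m := hirr.natDegree_pos
  have hcardF : Fintype.card F = N ^ m := by
    rw [Module.card_eq_pow_finrank (K := κ) (V := F), hrank]
  set z : F := AdjoinRoot.root d with hz
  have hzq : z ^ q = algebraMap κ F c := by
    have : (aeval z) (X ^ q - C c) = 0 := by
      rw [AdjoinRoot.aeval_eq, AdjoinRoot.mk_eq_zero]; exact hdvd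
    simpa [sub_eq_zero] using this
  have hy0 : y ≠ 0 := by rintro rfl; exact hc (by simpa [zero_pow hq.ne_zero] using hy.symm)
  set y' : F := algebraMap κ F y with hy'
  have hy'0 : y' ≠ 0 := by
    simpa [hy'] using (map_ne_zero_iff _ (algebraMap κ F).injective).mpr hy0
  set ζ : F := z * y'⁻¹ with hζ
  have hζq : ζ ^ q = 1 := by
    rw [hζ, mul_pow, inv_pow, hzq, hy', ← map_pow, hy]
    exact mul_inv_cancel₀ ((map_ne_zero_iff _ (algebraMap κ F).injective).mpr hc)
  have hζ1 : ζ ≠ 1 := by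
    intro h
    apply hne
    have hzy : z = y' := by
      rw [hζ, mul_inv_eq_one₀ hy'0] at h
      exact h
    have h1 : minpoly κ z = d := by
      rw [AdjoinRoot.minpoly_root hmon.ne_zero, hmon.leadingCoeff, inv_one, map_one, mul_one]
    have h2 : minpoly κ z = X - C y := by
      rw [hzy, hy']; exact minpoly.eq_X_sub_C F y
    rw [← h1, h2]
  have hζ0 : ζ ≠ 0 := by
    intro h; rw [h] at hζq; simp [zero_pow hq.ne_zero] at hζq
  have hord : orderOf ζ = q := orderOf_eq_prime hζq hζ1
  -- a ∣ m
  have hqm : q ∣ N ^ m - 1 := by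
    have h1 : orderOf (Units.mk0 ζ hζ0) ∣ Fintype.card Fˣ := orderOf_dvd_card
    rw [← orderOf_units] at h1
    simp only [Units.val_mk0] at h1
    rw [hord] at h1
    rwa [Fintype.card_units, hcardF] at h1
  have ham : a ∣ m := by
    rw [ha, orderOf_dvd_iff_pow_eq_one]
    have : ((N ^ m - 1 : ℕ) : ZMod q) = 0 := (ZMod.natCast_eq_zero_iff _ _).mpr hqm
    have h2 : 1 ≤ N ^ m := Nat.one_le_pow _ _ (by omega)
    rw [Nat.cast_sub h2] at this
    push_cast at this ⊢
    linear_combination this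
  -- m ≤ a via Frobenius fixed points
  have hP := ringChar.charP κ
  have hPp : (ringChar κ).Prime := CharP.char_is_prime κ (ringChar κ)
  obtain ⟨s, -, hcard⟩ := FiniteField.card κ (ringChar κ)
  haveI : CharP F (ringChar κ) := charP_of_injective_algebraMap (algebraMap κ F).injective _
  haveI : ExpChar F (ringChar κ) := ExpChar.prime hPp
  set P := ringChar κ
  have hNa : N ^ a = P ^ (s * a : ℕ) := by rw [hN, hcard, ← pow_mul]
  let φ : F →+* F := iterateFrobenius F P (s * a)
  have hφ : ∀ x : F, φ x = x ^ N ^ a := by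
    intro x; rw [iterateFrobenius_def, hNa]
  let ψ : F →ₐ[κ] F :=
    { φ with
      commutes' := by
        intro u
        show φ _ = _
        rw [hφ, ← map_pow]
        congr 1
        exact FiniteField.pow_card_pow a u }
  have hζfix : ζ ^ N ^ a = ζ := by
    have h1 : ζ ^ (N ^ a - 1) = 1 := by
      rw [← hord] at hqa
      exact orderOf_dvd_iff_pow_eq_one.mp hqa
    calc ζ ^ N ^ a = ζ ^ (N ^ a - 1) * ζ := by
          rw [← pow_succ]; congr 1; omega
      _ = ζ := by rw [h1, one_mul]
  have hadjz : Algebra.adjoin κ ({z} : Set F) = ⊤ := AdjoinRoot.adjoinRoot_eq_top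
  have hadjζ : Algebra.adjoin κ ({ζ} : Set F) = ⊤ := by
    rw [eq_top_iff, ← hadjz]
    apply Algebra.adjoin_le
    intro w hw
    rw [Set.mem_singleton_iff] at hw
    subst hw
    have hζmem : ζ ∈ Algebra.adjoin κ ({ζ} : Set F) := Algebra.subset_adjoin rfl
    have : z = ζ * y' := by rw [hζ, mul_assoc, inv_mul_cancel₀ hy'0, mul_one]
    rw [this, hy']
    exact mul_mem hζmem (Subalgebra.algebraMap_mem _ y)
  have hfix : ∀ x : F, x ^ N ^ a = x := by
    have hle : (⊤ : Subalgebra κ F) ≤ AlgHom.equalizer ψ (AlgHom.id κ F) := by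
      rw [← hadjζ]
      apply Algebra.adjoin_le
      intro w hw
      rw [Set.mem_singleton_iff] at hw
      subst hw
      show ψ ζ = ζ
      show φ ζ = ζ
      rw [hφ, hζfix]
    intro x
    have := hle (Algebra.mem_top (x := x))
    have hx : φ x = x := this
    exact (hφ x).symm.trans hx
  have hmlea : m ≤ a := by
    have hcardle : Fintype.card F ≤ N ^ a := by
      have hg0 : ((X : F[X]) ^ N ^ a - X) ≠ 0 :=
        FiniteField.X_pow_card_pow_sub_X_ne_zero F (by omega) hN1
      have hdeg : ((X : F[X]) ^ N ^ a - X).natDegree = N ^ a :=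
        FiniteField.X_pow_card_pow_sub_X_natDegree_eq F (by omega) hN1
      have hsub : (Finset.univ : Finset F) ⊆ ((X : F[X]) ^ N ^ a - X).roots.toFinset := by
        intro x _
        rw [Multiset.mem_toFinset, mem_roots hg0]
        simp [hfix x]
      calc Fintype.card F = (Finset.univ : Finset F).card := rfl
        _ ≤ ((X : F[X]) ^ N ^ a - X).roots.toFinset.card := Finset.card_le_card hsub
        _ ≤ Multiset.card ((X : F[X]) ^ N ^ a - X).roots := Multiset.toFinset_card_le _
        _ ≤ ((X : F[X]) ^ N ^ a - X).natDegree := ((X : F[X]) ^ N ^ a - X).card_roots'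
        _ = N ^ a := hdeg
    rw [hcardF] at hcardle
    exact (Nat.pow_le_pow_iff_right hN1).mp hcardle
  have : a ≤ m := Nat.le_of_dvd hmpos ham
  omega

lemma aux_nat_card_mem {α : Type*} [DecidableEq α] (s : Multiset α) (h : s.Nodup) :
    Nat.card {x // x ∈ s} = Multiset.card s := by
  have e : {x // x ∈ s} ≃ {x // x ∈ s.toFinset} :=
    Equiv.subtypeEquivRight (by simp)
  rw [Nat.card_congr e, Nat.card_eq_finsetCard]
  exact Multiset.toFinset_card_eq_card_iff_nodup.mpr h

lemma aux_count {κ : Type*} [Field κ] [Fintype κ] [DecidableEq κ] {q : ℕ} (hq : q.Prime)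
    {c : κ} (hc : c ≠ 0) (hq0 : (q : κ) ≠ 0) {y : κ} (hy : y ^ q = c) :
    Multiset.card (normalizedFactors ((X : κ[X]) ^ q - C c)) =
      1 + (q - 1) / orderOf ((Fintype.card κ : ZMod q)) := by
  classical
  set a := orderOf ((Fintype.card κ : ZMod q)) with ha
  have hapos : 0 < a := aux_orderOf_pos hq (aux_card_ne κ hq hq0)
  set f : κ[X] := X ^ q - C c with hf
  have hfm : f.Monic := monic_X_pow_sub_C c hq.ne_zero
  have hf0 : f ≠ 0 := hfm.ne_zero
  have hsf : Squarefree f := (separable_X_pow_sub_C c hq0 hc).squarefree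
  have hnodup : (normalizedFactors f).Nodup :=
    (squarefree_iff_nodup_normalizedFactors hf0).mp hsf
  -- membership of X - C y
  have hXyirr : Irreducible ((X : κ[X]) - C y) := irreducible_X_sub_C y
  have hXydvd : (X : κ[X]) - C y ∣ f := by
    refine dvd_iff_isRoot.mpr ?_
    simp [hf, Polynomial.IsRoot, hy]
  have hmem : (X : κ[X]) - C y ∈ normalizedFactors f := by
    obtain ⟨g, hg, hgass⟩ := exists_mem_normalizedFactors_of_dvd hf0 hXyirr hXydvd
    have hgm : g.Monic := by
      have := normalize_normalized_factor g hg
      have hg0 : g ≠ 0 := (irreducible_of_normalized_factor g hg).ne_zero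
      rw [← this]; exact monic_normalize hg0
    rwa [eq_of_monic_of_associated (monic_X_sub_C y) hgm hgass]
  set s := normalizedFactors f with hs
  set t := s.erase ((X : κ[X]) - C y) with ht
  have hst : s = ((X : κ[X]) - C y) ::ₘ t := (Multiset.cons_erase hmem).symm
  have hmonall : ∀ g ∈ s, g.Monic := by
    intro g hg
    have := normalize_normalized_factor g hg
    have hg0 : g ≠ 0 := (irreducible_of_normalized_factor g hg).ne_zero
    rw [← this]; exact monic_normalize hg0
  have hprod : s.prod = f := by
    refine eq_of_monic_of_associated ?_ hfm (prod_normalizedFactors hf0)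
    have := monic_multiset_prod_of_monic s id (fun i hi => hmonall i hi)
    rwa [Multiset.map_id] at this
  have hsum : (s.map natDegree).sum = q := by
    rw [← natDegree_multiset_prod_of_monic (t := s) hmonall, hprod, hf, natDegree_X_pow_sub_C]
  have htdeg : ∀ g ∈ t, natDegree g = a := by
    intro g hg
    have hgs : g ∈ s := Multiset.mem_of_mem_erase hg
    have hgne : g ≠ (X : κ[X]) - C y := ((Multiset.Nodup.mem_erase_iff hnodup).mp hg).1
    exact aux_deg_factor hq hc hq0 hy (hmonall g hgs)
      (irreducible_of_normalized_factor g hgs) (dvd_of_mem_normalizedFactors hgs) hgne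
  have htmap : t.map natDegree = Multiset.replicate (Multiset.card t) a :=
    Multiset.eq_replicate.mpr ⟨by simp, by
      intro b hb
      obtain ⟨g, hg, rfl⟩ := Multiset.mem_map.mp hb
      exact htdeg g hg⟩
  have hq1 : q = 1 + Multiset.card t * a := by
    have := hsum
    rw [hst] at this
    simp only [Multiset.map_cons, Multiset.sum_cons, natDegree_X_sub_C, htmap,
      Multiset.sum_replicate, smul_eq_mul] at this
    omega
  have hdiv : (q - 1) / a = Multiset.card t := by
    have : q - 1 = Multiset.card t * a := by omega
    rw [this, Nat.mul_div_cancel _ hapos]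
  rw [hst, Multiset.card_cons, hdiv]
  omega

lemma aux_count_irred {κ : Type*} [Field κ] [Fintype κ] [DecidableEq κ] {q : ℕ} (hq : q.Prime)
    {c : κ} (hnc : ∀ b : κ, b ^ q ≠ c) :
    Multiset.card (normalizedFactors ((X : κ[X]) ^ q - C c)) = 1 := by
  classical
  have hirr : Irreducible ((X : κ[X]) ^ q - C c) :=
    X_pow_sub_C_irreducible_of_prime hq hnc
  rw [normalizedFactors_irreducible hirr]
  simp

open NumberField

set_option maxHeartbeats 1000000 in
set_option synthInstance.maxHeartbeats 400000 in
/-- Let `K ⊆ L` be number fields with `L = K(α^{1/q})` of degree `q` (an odd prime), where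
`α ∈ 𝓞 K` is not a `q`th power in `K`.  Let `p` be a finite prime of `K` not dividing `q`
nor `α`, unramified in `L`, with residue field of size `N`.  Then the number of primes of `L`
above `p` is `1` if the reduction of `α` is not a `q`th power in the residue field, and is
`1 + (q−1)/a` otherwise, where `a` is the multiplicative order of `N` modulo `q`. -/
theorem stmt_10 (q : ℕ) (hq : q.Prime) (hodd : Odd q)
    (K L : Type*) [Field K] [NumberField K] [Field L] [NumberField L] [Algebra K L]
    (α : 𝓞 K) (hα0 : α ≠ 0)
    (hαpow : ¬ ∃ x : K, x ^ q = algebraMap (𝓞 K) K α)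
    (β : L) (hβ : β ^ q = algebraMap K L (algebraMap (𝓞 K) K α))
    (hgen : Algebra.adjoin K {β} = ⊤) (hdeg : Module.finrank K L = q)
    (p : Ideal (𝓞 K)) [p.IsMaximal] (hp : p ≠ ⊥)
    (hpq : (q : 𝓞 K) ∉ p) (hpα : α ∉ p)
    (hunram : ∀ Q : Ideal (𝓞 L), Q.IsPrime → Q.LiesOver p →
      Ideal.ramificationIdx' p Q = 1) :
    ((∃ y : 𝓞 K ⧸ p, y ^ q = Ideal.Quotient.mk p α) →
      Nat.card {Q : Ideal (𝓞 L) // Q.IsPrime ∧ Q.LiesOver p} =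
        1 + (q - 1) / orderOf ((Nat.card (𝓞 K ⧸ p) : ZMod q))) ∧
    ((¬ ∃ y : 𝓞 K ⧸ p, y ^ q = Ideal.Quotient.mk p α) →
      Nat.card {Q : Ideal (𝓞 L) // Q.IsPrime ∧ Q.LiesOver p} = 1) := by
  have hq0 : q ≠ 0 := hq.ne_zero
  -- β is an algebraic integer
  have hβq' : β ^ q = algebraMap (𝓞 L) L (algebraMap (𝓞 K) (𝓞 L) α) := by
    rw [hβ, ← IsScalarTower.algebraMap_apply (𝓞 K) K L,
      ← IsScalarTower.algebraMap_apply (𝓞 K) (𝓞 L) L]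
  have hβint : IsIntegral ℤ β := by
    refine IsIntegral.of_pow hq.pos ?_
    rw [hβq']
    exact (algebraMap (𝓞 K) (𝓞 L) α).2
  set B : 𝓞 L := ⟨β, hβint⟩ with hB
  have hBβ : algebraMap (𝓞 L) L B = β := rfl
  have hLinj : Function.Injective (algebraMap (𝓞 L) L) := IsFractionRing.injective _ _
  have hKinj : Function.Injective (algebraMap (𝓞 K) K) := IsFractionRing.injective _ _
  have hBq : B ^ q = algebraMap (𝓞 K) (𝓞 L) α := by
    apply hLinj
    rw [map_pow, hBβ, hβq']
  have hKLinj : Function.Injective (algebraMap (𝓞 K) L) := by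
    rw [IsScalarTower.algebraMap_eq (𝓞 K) K L]
    exact (algebraMap K L).injective.comp hKinj
  have hinj : Function.Injective (algebraMap (𝓞 K) (𝓞 L)) := by
    intro x y h
    apply hKLinj
    rw [IsScalarTower.algebraMap_apply (𝓞 K) (𝓞 L) L,
      IsScalarTower.algebraMap_apply (𝓞 K) (𝓞 L) L, h]
  haveI : NoZeroSMulDivisors (𝓞 K) (𝓞 L) := ⟨fun {c x} h => by
    rw [Algebra.smul_def, mul_eq_zero] at h
    exact h.imp_left (fun h' => hinj (by rw [h', map_zero]))⟩
  -- minimal polynomials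
  set aK : K := algebraMap (𝓞 K) K α with haK
  have hirrK : Irreducible ((Polynomial.X : Polynomial K) ^ q - Polynomial.C aK) :=
    X_pow_sub_C_irreducible_of_prime hq (fun b hb => hαpow ⟨b, hb⟩)
  have hminK : minpoly K β = Polynomial.X ^ q - Polynomial.C aK := by
    refine (minpoly.eq_of_irreducible_of_monic hirrK ?_
      (Polynomial.monic_X_pow_sub_C _ hq0)).symm
    simp [hβ, sub_eq_zero]
  have hBint : IsIntegral (𝓞 K) B := IsIntegralClosure.isIntegral (𝓞 K) L B
  have hminO : minpoly (𝓞 K) B = Polynomial.X ^ q - Polynomial.C α := by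
    apply Polynomial.map_injective (algebraMap (𝓞 K) K) hKinj
    rw [← minpoly.isIntegrallyClosed_eq_field_fractions K L hBint, hBβ, hminK]
    simp [haK]
  -- conductor is coprime to p
  have hgen' : Algebra.adjoin K {algebraMap (𝓞 L) L B} = ⊤ := by rw [hBβ]; exact hgen
  have hcond := conductor_mul_differentIdeal (𝓞 K) K L B hgen'
  have hqαmem : algebraMap (𝓞 K) (𝓞 L) ((q : 𝓞 K) * α) ∈ conductor (𝓞 K) B := by
    have hspan : Ideal.span {Polynomial.aeval B (Polynomial.derivative (minpoly (𝓞 K) B))} ≤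
        conductor (𝓞 K) B := by
      rw [← hcond]; exact Ideal.mul_le_left
    apply hspan
    rw [Ideal.mem_span_singleton]
    refine ⟨B, ?_⟩
    rw [hminO]
    simp only [map_mul, Polynomial.derivative_sub, Polynomial.derivative_X_pow,
      Polynomial.derivative_C, sub_zero, map_natCast, map_pow, Polynomial.aeval_X,
      Polynomial.aeval_C, map_mul, Polynomial.aeval_natCast]
    rw [mul_assoc, ← pow_succ, show q - 1 + 1 = q from by omega, hBq]
  have hsup : (conductor (𝓞 K) B).comap (algebraMap (𝓞 K) (𝓞 L)) ⊔ p = ⊤ := by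
    by_contra h
    have h2 : (conductor (𝓞 K) B).comap (algebraMap (𝓞 K) (𝓞 L)) ⊔ p = p :=
      ((‹p.IsMaximal›.eq_of_le h le_sup_right)).symm
    have h3 : (q : 𝓞 K) * α ∈ p := by
      rw [← h2]
      exact Ideal.mem_sup_left hqαmem
    rcases (Ideal.isPrime_of_prime (Ideal.prime_of_isPrime hp ‹p.IsMaximal›.isPrime)).mem_or_mem h3
      with h4 | h4
    · exact hpq h4
    · exact hpα h4
  -- Kummer-Dedekind
  have hmapbot : p.map (algebraMap (𝓞 K) (𝓞 L)) ≠ ⊥ := by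
    rw [Ne, Ideal.map_eq_bot_iff_of_injective hinj]
    exact hp
  letI : Field (𝓞 K ⧸ p) := Ideal.Quotient.field p
  letI : DecidableEq (𝓞 K ⧸ p) := Classical.decEq _
  letI : Fintype (𝓞 K ⧸ p) := @Fintype.ofFinite _ (Ideal.finiteQuotientOfFreeOfNeBot p hp)
  let e2 := KummerDedekind.normalizedFactorsMapEquivNormalizedFactorsMinPolyMk
    (inferInstance : p.IsMaximal) hp hsup hBint
  have e1 : {Q : Ideal (𝓞 L) // Q.IsPrime ∧ Q.LiesOver p} ≃
      {J : Ideal (𝓞 L) // J ∈ UniqueFactorizationMonoid.normalizedFactors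
        (p.map (algebraMap (𝓞 K) (𝓞 L)))} := by
    refine Equiv.subtypeEquivRight fun Q => ?_
    rw [Ideal.mem_normalizedFactors_iff hmapbot]
    constructor
    · rintro ⟨hQp, hQl⟩
      refine ⟨hQp, Ideal.map_le_iff_le_comap.mpr ?_⟩
      exact hQl.over.le
    · rintro ⟨hQp, hQle⟩
      refine ⟨hQp, ⟨?_⟩⟩
      have hle : p ≤ Q.comap (algebraMap (𝓞 K) (𝓞 L)) := Ideal.map_le_iff_le_comap.mp hQle
      have hne : Q.comap (algebraMap (𝓞 K) (𝓞 L)) ≠ ⊤ := (hQp.comap _).ne_top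
      exact (‹p.IsMaximal›.eq_of_le hne hle)
  set c : 𝓞 K ⧸ p := Ideal.Quotient.mk p α with hc
  have hc0 : c ≠ 0 := by
    rw [hc, Ne, Ideal.Quotient.eq_zero_iff_mem]
    exact hpα
  have hqc0 : ((q : ℕ) : 𝓞 K ⧸ p) ≠ 0 := by
    have : ((q : ℕ) : 𝓞 K ⧸ p) = Ideal.Quotient.mk p ((q : ℕ) : 𝓞 K) := by
      push_cast; rfl
    rw [this, Ne, Ideal.Quotient.eq_zero_iff_mem]
    exact hpq
  have hmap' : (minpoly (𝓞 K) B).map (Ideal.Quotient.mk p) =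
      Polynomial.X ^ q - Polynomial.C c := by
    rw [hminO]
    simp [Polynomial.map_sub, Polynomial.map_pow]
    exact hc.symm
  have e3 : {d : Polynomial (𝓞 K ⧸ p) // d ∈ UniqueFactorizationMonoid.normalizedFactors
        ((minpoly (𝓞 K) B).map (Ideal.Quotient.mk p))} ≃
      {d : Polynomial (𝓞 K ⧸ p) // d ∈ UniqueFactorizationMonoid.normalizedFactors
        ((Polynomial.X : Polynomial (𝓞 K ⧸ p)) ^ q - Polynomial.C c)} :=
    Equiv.subtypeEquivRight fun d => by rw [hmap']
  have key : Nat.card {Q : Ideal (𝓞 L) // Q.IsPrime ∧ Q.LiesOver p} =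
      Multiset.card (UniqueFactorizationMonoid.normalizedFactors
        ((Polynomial.X : Polynomial (𝓞 K ⧸ p)) ^ q - Polynomial.C c)) := by
    rw [Nat.card_congr ((e1.trans e2).trans e3)]
    apply aux_nat_card_mem _
    refine (UniqueFactorizationMonoid.squarefree_iff_nodup_normalizedFactors ?_).mp
      (Polynomial.separable_X_pow_sub_C c hqc0 hc0).squarefree
    exact (Polynomial.monic_X_pow_sub_C c hq0).ne_zero
  have hNcard : ((Nat.card (𝓞 K ⧸ p) : ℕ) : ZMod q) = ((Fintype.card (𝓞 K ⧸ p) : ℕ) : ZMod q) := by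
    rw [Nat.card_eq_fintype_card]
  constructor
  · rintro ⟨y, hy⟩
    rw [key, aux_count hq hc0 hqc0 hy, hNcard]
  · intro hno
    rw [key, aux_count_irred hq (fun b hb => hno ⟨b, hb⟩)]
end
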